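/- Let S be a finite nonempty set, let P : S → [0,1] satisfy ∑_{s ∈ S} P(s) = 1, and let n, ñ : S → ℝ with n(s) ≥ 0 for all s. Let N, Ñ, E₁, E₂, L be real numbers with N ≥ 0, Ñ ≥ 0, E₁ ≥ 0, E₂ ≥ 0, L ≥ 0. Assume N ≤ Ñ + E₁, Ñ ≤ N + E₁, |ñ(s) − n(s)| ≤ E₂ for all s ∈ S, and ∑_{s ∈ S} |n(s)/(N ∨ 1) − P(s)| ≤ L/√(N ∨ 1). Then ∑_{s ∈ S} |ñ(s)/((Ñ + E₁) ∨ 1) − P(s)| ≤ L/√((Ñ + E₁) ∨ 1) + (|S|·E₂ + 2E₁)/((Ñ + E₁) ∨ 1). -/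

import Mathlib

/-- Concentration of the private empirical transition distribution (transition
part of Lemma `lem:conc_po`): if the private visit count `Ñ` is within `E₁` of
`N`, the private transition counts `ñ s` are within `E₂` of `n s`, and the
non-private empirical distribution `s ↦ n s/(N ∨ 1)` is within ℓ₁-distance
`L/√(N ∨ 1)` of the true distribution `P`, then the private empirical
distribution `s ↦ ñ s/((Ñ + E₁) ∨ 1)` is within ℓ₁-distance
`L/√((Ñ + E₁) ∨ 1) + (|S| E₂ + 2E₁)/((Ñ + E₁) ∨ 1)` of `P`. -/
theorem private_transition_estimate_concentration
    {S : Type*} [Fintype S] [Nonempty S]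
    (P : S → ℝ) (hP0 : ∀ s, 0 ≤ P s) (hP1 : ∀ s, P s ≤ 1)
    (hPsum : ∑ s, P s = 1)
    (n ntil : S → ℝ) (hn : ∀ s, 0 ≤ n s)
    (N Ntil E1 E2 L : ℝ)
    (hN : 0 ≤ N) (hNtil : 0 ≤ Ntil) (hE1 : 0 ≤ E1) (hE2 : 0 ≤ E2) (hL : 0 ≤ L)
    (h1 : N ≤ Ntil + E1) (h2 : Ntil ≤ N + E1)
    (h3 : ∀ s, |ntil s - n s| ≤ E2)
    (h4 : ∑ s, |n s / max N 1 - P s| ≤ L / Real.sqrt (max N 1)) :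
    ∑ s, |ntil s / max (Ntil + E1) 1 - P s| ≤
      L / Real.sqrt (max (Ntil + E1) 1)
        + ((Fintype.card S : ℝ) * E2 + 2 * E1) / max (Ntil + E1) 1 := by
  set M := max N 1 with hMdef
  set M' := max (Ntil + E1) 1 with hM'def
  have hM1 : (1:ℝ) ≤ M := le_max_right _ _
  have hM'1 : (1:ℝ) ≤ M' := le_max_right _ _
  have hMpos : (0:ℝ) < M := lt_of_lt_of_le one_pos hM1
  have hM'pos : (0:ℝ) < M' := lt_of_lt_of_le one_pos hM'1
  have hMM' : M ≤ M' := max_le_max h1 le_rfl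
  have hdiff : M' - M ≤ 2 * E1 := by
    have ha : M' ≤ max (N + 2*E1) 1 := max_le_max (by linarith) le_rfl
    have hb : max (N + 2*E1) 1 ≤ M + 2*E1 := by
      apply max_le
      · exact add_le_add (le_max_left _ _) le_rfl
      · linarith
    linarith
  have key : ∀ s, |ntil s / M' - P s| ≤
      |ntil s - n s| / M' + |n s / M - P s| * (M / M') + P s * ((M' - M) / M') := by
    intro s
    have hid : ntil s / M' - P s =
        (ntil s - n s) / M' + (n s / M - P s) * (M / M') + (- P s) * ((M' - M) / M') := by
      field_simp
      ring
    rw [hid]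
    calc |(ntil s - n s) / M' + (n s / M - P s) * (M / M') + (- P s) * ((M' - M) / M')|
        ≤ |(ntil s - n s) / M'| + |(n s / M - P s) * (M / M')|
            + |(- P s) * ((M' - M) / M')| :=
          (abs_add_le _ _).trans (add_le_add_left (abs_add_le _ _) _)
      _ = |ntil s - n s| / M' + |n s / M - P s| * (M / M') + P s * ((M' - M) / M') := by
          rw [abs_div, abs_mul, abs_mul, abs_neg, abs_of_pos hM'pos,
            abs_of_nonneg (hP0 s), abs_of_nonneg (div_nonneg hMpos.le hM'pos.le),
            abs_of_nonneg (div_nonneg (by linarith) hM'pos.le)]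
  have step1 : ∑ s, |ntil s / M' - P s|
      ≤ ((Fintype.card S : ℝ) * E2) / M' + (L / Real.sqrt M) * (M / M')
          + 1 * ((M' - M) / M') := by
    calc ∑ s, |ntil s / M' - P s|
        ≤ ∑ s, (|ntil s - n s| / M' + |n s / M - P s| * (M / M') + P s * ((M' - M) / M')) :=
          Finset.sum_le_sum fun s _ => key s
      _ = (∑ s, |ntil s - n s|) / M' + (∑ s, |n s / M - P s|) * (M / M')
            + (∑ s, P s) * ((M' - M) / M') := by
          rw [Finset.sum_add_distrib, Finset.sum_add_distrib, Finset.sum_div,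
            ← Finset.sum_mul, ← Finset.sum_mul]
      _ ≤ ((Fintype.card S : ℝ) * E2) / M' + (L / Real.sqrt M) * (M / M')
            + 1 * ((M' - M) / M') := by
          have hb1 : (∑ s, |ntil s - n s|) ≤ (Fintype.card S : ℝ) * E2 := by
            calc (∑ s, |ntil s - n s|) ≤ ∑ _s : S, E2 :=
                Finset.sum_le_sum fun s _ => h3 s
              _ = (Fintype.card S : ℝ) * E2 := by
                simp [Finset.sum_const, Finset.card_univ, nsmul_eq_mul]
          rw [hPsum]
          gcongr <;> positivity
  have hsM : (0:ℝ) < Real.sqrt M := Real.sqrt_pos.mpr hMpos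
  have hsM' : (0:ℝ) < Real.sqrt M' := Real.sqrt_pos.mpr hM'pos
  have step2 : (L / Real.sqrt M) * (M / M') ≤ L / Real.sqrt M' := by
    rw [div_mul_div_comm, div_le_div_iff₀ (by positivity) (by positivity)]
    have h : Real.sqrt M ≤ Real.sqrt M' := Real.sqrt_le_sqrt hMM'
    have hm : Real.sqrt M * Real.sqrt M = M := Real.mul_self_sqrt hMpos.le
    have hm' : Real.sqrt M' * Real.sqrt M' = M' := Real.mul_self_sqrt hM'pos.le
    calc L * M * Real.sqrt M' = (L * Real.sqrt M * Real.sqrt M') * Real.sqrt M := by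
          linear_combination (-(L * Real.sqrt M')) * hm
      _ ≤ (L * Real.sqrt M * Real.sqrt M') * Real.sqrt M' :=
          mul_le_mul_of_nonneg_left h (by positivity)
      _ = L * (Real.sqrt M * M') := by
          linear_combination (L * Real.sqrt M) * hm'
  have step3 : (1:ℝ) * ((M' - M) / M') ≤ 2 * E1 / M' := by
    rw [one_mul]
    gcongr
  calc ∑ s, |ntil s / M' - P s|
      ≤ ((Fintype.card S : ℝ) * E2) / M' + (L / Real.sqrt M) * (M / M')
          + 1 * ((M' - M) / M') := step1
    _ ≤ ((Fintype.card S : ℝ) * E2) / M' + L / Real.sqrt M' + 2 * E1 / M' := by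
        linarith [step2, step3]
    _ = L / Real.sqrt M' + ((Fintype.card S : ℝ) * E2 + 2 * E1) / M' := by
        rw [add_div]; ring
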